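/- For t > 0, the quadratic in q given by M(t,q) = g0(t) - g1(t) q + g2(t) q^2, with g0(t) = e^t(2 - 2e^t + t + t e^t), g1(t) = 2(e^t - 1)(1 - e^t + t e^t), g2(t) = t(e^t - 1)^2, satisfies M(t,q) > 0 for every q ≤ 0 and for every q ≥ 1. -/
import Mathlib


noncomputable def g0 (t : ℝ) : ℝ := Real.exp t * (2 - 2 * Real.exp t + t + t * Real.exp t)
noncomputable def g1 (t : ℝ) : ℝ := 2 * (Real.exp t - 1) * (1 - Real.exp t + t * Real.exp t)
noncomputable def g2 (t : ℝ) : ℝ := t * (Real.exp t - 1) ^ 2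
noncomputable def M (t q : ℝ) : ℝ := g0 t - g1 t * q + g2 t * q ^ 2

lemma A_pos {t : ℝ} (ht : 0 < t) : 0 < 1 + (t - 1) * Real.exp t := by
  have h1 : -t + 1 < Real.exp (-t) := Real.add_one_lt_exp (show (-t) ≠ 0 by linarith)
  have h2 := Real.exp_pos t
  have h3 : Real.exp (-t) * Real.exp t = 1 := by
    rw [← Real.exp_add]; simp
  nlinarith

lemma B_pos {t : ℝ} (ht : 0 < t) : 0 < 2 + t + (t - 2) * Real.exp t := by
  have key : StrictMonoOn (fun s : ℝ => 2 + s + (s - 2) * Real.exp s) (Set.Ici 0) := by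
    apply strictMonoOn_of_deriv_pos (convex_Ici 0)
    · fun_prop
    · intro s hs
      rw [interior_Ici] at hs
      have hd : HasDerivAt (fun s : ℝ => 2 + s + (s - 2) * Real.exp s)
          (1 + (1 * Real.exp s + (s - 2) * Real.exp s)) s := by
        exact ((hasDerivAt_id s).const_add 2).add
          (((hasDerivAt_id s).sub_const 2).mul (Real.hasDerivAt_exp s))
      rw [hd.deriv]
      have := A_pos hs
      nlinarith [Real.exp_pos s]
  have := key (Set.self_mem_Ici) (le_of_lt ht : (0:ℝ) ≤ t) ht
  simpa using this

lemma C_pos {t : ℝ} (ht : 0 < t) : 0 < t * (Real.exp t + 1) - 2 * (Real.exp t - 1) := by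
  have key : StrictMonoOn (fun s : ℝ => s * (Real.exp s + 1) - 2 * (Real.exp s - 1)) (Set.Ici 0) := by
    apply strictMonoOn_of_deriv_pos (convex_Ici 0)
    · fun_prop
    · intro s hs
      rw [interior_Ici] at hs
      have hd : HasDerivAt (fun s : ℝ => s * (Real.exp s + 1) - 2 * (Real.exp s - 1))
          ((1 * (Real.exp s + 1) + s * Real.exp s) - 2 * Real.exp s) s := by
        exact ((hasDerivAt_id s).mul ((Real.hasDerivAt_exp s).add_const 1)).sub
          (((Real.hasDerivAt_exp s).sub_const 1).const_mul 2)
      rw [hd.deriv]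
      have := A_pos hs
      nlinarith
  have := key (Set.self_mem_Ici) (le_of_lt ht : (0:ℝ) ≤ t) ht
  simpa using this

theorem M_pos (t q : ℝ) (ht : 0 < t) (hq : q ≤ 0 ∨ 1 ≤ q) : 0 < M t q := by
  have hA := A_pos ht
  have hB := B_pos ht
  have hC := C_pos ht
  have hD : t + 1 < Real.exp t := Real.add_one_lt_exp ht.ne'
  have hE : (1:ℝ) < Real.exp t := by linarith
  have hEp := Real.exp_pos t
  unfold M g0 g1 g2
  rcases hq with hq | hq
  · nlinarith [mul_pos hEp hB,
      mul_nonneg (mul_nonneg (by linarith : (0:ℝ) ≤ Real.exp t - 1) hA.le)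
        (neg_nonneg.mpr hq),
      mul_nonneg (mul_nonneg ht.le (sq_nonneg (Real.exp t - 1))) (sq_nonneg q)]
  · nlinarith [hC,
      mul_nonneg (mul_nonneg ht.le (sq_nonneg (Real.exp t - 1))) (sq_nonneg (q - 1)),
      mul_nonneg (mul_nonneg (by linarith : (0:ℝ) ≤ Real.exp t - 1)
        (by linarith : (0:ℝ) ≤ Real.exp t - t - 1)) (by linarith : (0:ℝ) ≤ q - 1)]
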